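/- Let n ≥ 3, let J_n ∈ M_n(ℂ) be the nilpotent Jordan block, and let B_n = E_{n−1,1} − E_{n,2} ∈ M_n(ℂ). Then the ℂ-linear span of all products of at most 2n − 3 elements of {J_n, B_n} (including the empty product, the identity matrix) is all of M_n(ℂ), and the ℂ-linear span of all products of at most 2n − 4 such elements (including the empty product) is a proper subspace of M_n(ℂ). That is, l({J_n, B_n}) = 2n − 3. -/

import Mathlib

open Matrix

/-- The `n × n` nilpotent Jordan block over `ℂ`. -/
def jordan (n : ℕ) : Matrix (Fin n) (Fin n) ℂ :=
  Matrix.of fun a b => if (a : ℕ) + 1 = (b : ℕ) then 1 else 0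

/-- `L_k(S)`: the ℂ-linear span of all words in `S` of length at most `k`
(including the empty word, the identity matrix). -/
noncomputable def wordSpan (n k : ℕ) (S : Set (Matrix (Fin n) (Fin n) ℂ)) :
    Submodule ℂ (Matrix (Fin n) (Fin n) ℂ) :=
  Submodule.span ℂ {M | ∃ w : List (Matrix (Fin n) (Fin n) ℂ),
    w.length ≤ k ∧ (∀ x ∈ w, x ∈ S) ∧ M = w.prod}

namespace Stmt8


variable {n : ℕ}

lemma std_apply (p q i j : Fin n) (c : ℂ) :
    Matrix.single p q c i j = if (p : ℕ) = i ∧ (q : ℕ) = j then c else 0 := by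
  simp only [Matrix.single, Matrix.of_apply, Fin.ext_iff]

lemma jordan_apply (i j : Fin n) : jordan n i j = if (i : ℕ) + 1 = (j : ℕ) then 1 else 0 := rfl

lemma jordan_pow_apply (m : ℕ) (i j : Fin n) :
    (jordan n ^ m) i j = if (i : ℕ) + m = (j : ℕ) then 1 else 0 := by
  induction m generalizing i j with
  | zero => simp [Matrix.one_apply, Fin.ext_iff, eq_comm]
  | succ m ih =>
    rw [pow_succ, Matrix.mul_apply]
    have hj := j.isLt
    by_cases h : (i : ℕ) + m < n
    · rw [Finset.sum_eq_single (⟨(i : ℕ) + m, h⟩ : Fin n)]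
      · rw [ih, jordan_apply]
        simp only [Fin.val_mk]
        split_ifs <;> first | rfl | (exfalso; omega) | (simp_all; try omega)
      · intro k _ hk
        have hkv : (i : ℕ) + m ≠ (k : ℕ) := fun hc => hk (Fin.ext (by simp [← hc]))
        rw [ih, if_neg hkv, zero_mul]
      · intro hmem; exact absurd (Finset.mem_univ _) hmem
    · rw [Finset.sum_eq_zero, if_neg (by omega)]
      intro k _
      have hk := k.isLt
      rw [ih, if_neg (by omega), zero_mul]

lemma std_mul_pow_apply (b : ℕ) (p q : Fin n) (c : ℂ) (i j : Fin n) :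
    (Matrix.single p q c * jordan n ^ b) i j
      = if (p : ℕ) = (i : ℕ) ∧ (q : ℕ) + b = (j : ℕ) then c else 0 := by
  rw [Matrix.mul_apply, Finset.sum_eq_single q]
  · rw [jordan_pow_apply, std_apply]
    split_ifs <;> first | rfl | (exfalso; omega) | (simp_all; try omega)
  · intro k _ hk
    have hkv : (q : ℕ) ≠ (k : ℕ) := fun hc => hk (Fin.ext (by simp [← hc]))
    rw [std_apply, if_neg (fun hc => hkv hc.2), zero_mul]
  · intro hmem; exact absurd (Finset.mem_univ _) hmem

lemma pow_mul_std_apply (a : ℕ) (p q : Fin n) (c : ℂ) (i j : Fin n) :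
    (jordan n ^ a * Matrix.single p q c) i j
      = if (i : ℕ) + a = (p : ℕ) ∧ (q : ℕ) = (j : ℕ) then c else 0 := by
  rw [Matrix.mul_apply, Finset.sum_eq_single p]
  · rw [jordan_pow_apply, std_apply]
    split_ifs <;> first | rfl | (exfalso; omega) | (simp_all; try omega)
  · intro k _ hk
    have hkv : (k : ℕ) ≠ (p : ℕ) := fun hc => hk (Fin.ext (by simp [hc]))
    rw [std_apply, if_neg (fun hc => hkv hc.1.symm), mul_zero]
  · intro hmem; exact absurd (Finset.mem_univ _) hmem

lemma std_mul_pow (b : ℕ) (p q : Fin n) (c : ℂ) (h : (q : ℕ) + b < n) :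
    Matrix.single p q c * jordan n ^ b = Matrix.single p ⟨(q : ℕ) + b, h⟩ c := by
  ext i j
  rw [std_mul_pow_apply, std_apply]

lemma std_mul_pow_eq_zero (b : ℕ) (p q : Fin n) (c : ℂ) (h : n ≤ (q : ℕ) + b) :
    Matrix.single p q c * jordan n ^ b = 0 := by
  ext i j
  have hj := j.isLt
  rw [std_mul_pow_apply, if_neg (fun hc => by omega)]
  rfl

lemma pow_mul_std (a : ℕ) (p q : Fin n) (c : ℂ) (h : a ≤ (p : ℕ)) :
    jordan n ^ a * Matrix.single p q c
      = Matrix.single ⟨(p : ℕ) - a, by have := p.isLt; omega⟩ q c := by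
  ext i j
  rw [pow_mul_std_apply, std_apply]
  have hi := i.isLt
  simp only [Fin.val_mk]
  split_ifs <;> first | rfl | (exfalso; omega) | (simp_all; try omega)

lemma jordan_pow_top (hn : 1 ≤ n) :
    jordan n ^ (n - 1) = Matrix.single ⟨0, by omega⟩ ⟨n - 1, by omega⟩ (1 : ℂ) := by
  ext i j
  rw [jordan_pow_apply, std_apply]
  have hi := i.isLt; have hj := j.isLt
  simp only [Fin.val_mk]
  split_ifs <;> first | rfl | (exfalso; omega) | (simp_all; try omega)



lemma std_mul_std (p q r s : Fin n) (c d : ℂ) :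
    Matrix.single p q c * Matrix.single r s d
      = if (q : ℕ) = (r : ℕ) then Matrix.single p s (c * d) else 0 := by
  by_cases h : q = r
  · subst h; rw [Matrix.single_mul_single_same, if_pos rfl]
  · rw [Matrix.single_mul_single_of_ne (h := h), if_neg (fun hv => h (Fin.ext hv))]

lemma std_congr {p q p' q' : Fin n} (hp : (p : ℕ) = (p' : ℕ)) (hq : (q : ℕ) = (q' : ℕ))
    (c : ℂ) : Matrix.single p q c = Matrix.single p' q' c := by
  obtain rfl : p = p' := Fin.ext hp
  obtain rfl : q = q' := Fin.ext hq
  rfl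

lemma one_eq_sum_diag (hn : 0 < n) :
    (1 : Matrix (Fin n) (Fin n) ℂ) = ∑ k : Fin n, Matrix.single k k 1 := by
  ext i j
  rw [Matrix.sum_apply, Finset.sum_eq_single i]
  · rw [std_apply, Matrix.one_apply]
    split_ifs <;> first | rfl | (exfalso; simp_all [Fin.ext_iff] <;> omega)
  · intro k _ hk
    rw [std_apply, if_neg (fun hc => hk (Fin.ext hc.1))]
  · intro hmem; exact absurd (Finset.mem_univ _) hmem

section B
variable (n) (hn : 3 ≤ n)

def Bmat : Matrix (Fin n) (Fin n) ℂ :=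
  Matrix.single ⟨n - 2, by have := hn; omega⟩ ⟨0, by have := hn; omega⟩ (1 : ℂ) -
    Matrix.single ⟨n - 1, by have := hn; omega⟩ ⟨1, by have := hn; omega⟩ (1 : ℂ)

lemma pow_mul_B (a : ℕ) (ha : a ≤ n - 2) :
    jordan n ^ a * Bmat n hn
      = Matrix.single ⟨n - 2 - a, by omega⟩ ⟨0, by omega⟩ (1 : ℂ) -
        Matrix.single ⟨n - 1 - a, by omega⟩ ⟨1, by omega⟩ (1 : ℂ) := by
  rw [Bmat, Matrix.mul_sub, pow_mul_std a _ _ _ (by simp <;> omega),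
    pow_mul_std a _ _ _ (by simp <;> omega)]

/-- J^{n-1-i} B J^{n-3} B J^j = -E_{i,j} for 1 ≤ i ≤ n-1, j < n. -/
lemma lower_word (i j : ℕ) (hi1 : 1 ≤ i) (hi : i ≤ n - 1) (hj : j < n) :
    jordan n ^ (n - 1 - i) * Bmat n hn * jordan n ^ (n - 3) * Bmat n hn * jordan n ^ j
      = -Matrix.single ⟨i, by omega⟩ ⟨j, by omega⟩ (1 : ℂ) := by
  rw [pow_mul_B n hn _ (by omega), sub_mul,
    std_mul_pow _ _ _ _ (by simp <;> omega), std_mul_pow _ _ _ _ (by simp <;> omega),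
    Bmat, sub_mul, Matrix.mul_sub, Matrix.mul_sub,
    std_mul_std, std_mul_std, std_mul_std, std_mul_std,
    if_neg (by simp <;> omega), if_neg (by simp <;> omega), if_pos (by simp <;> omega),
    if_neg (by simp <;> omega)]
  simp only [zero_sub, sub_zero, mul_one, sub_self, zero_sub, neg_neg]
  rw [neg_mul, std_mul_pow _ _ _ _ (by simp <;> omega)]
  exact congrArg Neg.neg (std_congr (by simp <;> omega) (by simp <;> omega) _)

/-- J^{n-2-i} B J^b = E_{i,b} - E_{i+1,b+1} for i ≤ n-2, b+1 < n. -/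
lemma pair_word (i b : ℕ) (hi : i ≤ n - 2) (hb : b + 1 < n) :
    jordan n ^ (n - 2 - i) * Bmat n hn * jordan n ^ b
      = Matrix.single ⟨i, by omega⟩ ⟨b, by omega⟩ (1 : ℂ) -
        Matrix.single ⟨i + 1, by omega⟩ ⟨b + 1, by omega⟩ (1 : ℂ) := by
  rw [pow_mul_B n hn _ (by omega), sub_mul,
    std_mul_pow _ _ _ _ (by simp <;> omega), std_mul_pow _ _ _ _ (by simp <;> omega)]
  congr 1 <;> exact std_congr (by simp <;> omega) (by simp <;> omega) _

/-- J^{n-2-i} B J^{n-1} = E_{i,n-1} for 1 ≤ i ≤ n-2 (indeed any i ≤ n-2). -/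
lemma lastcol_word (i : ℕ) (hi : i ≤ n - 2) :
    jordan n ^ (n - 2 - i) * Bmat n hn * jordan n ^ (n - 1)
      = Matrix.single ⟨i, by omega⟩ ⟨n - 1, by omega⟩ (1 : ℂ) := by
  rw [pow_mul_B n hn _ (by omega), sub_mul,
    std_mul_pow _ _ _ _ (by simp <;> omega), std_mul_pow_eq_zero _ _ _ _ (by simp <;> omega),
    sub_zero]
  exact std_congr (by simp <;> omega) (by simp <;> omega) _

/-- J^{n-1} B J^b = -E_{0,b+1} for b+1 < n. -/
lemma top_word (b : ℕ) (hb : b + 1 < n) :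
    jordan n ^ (n - 1) * Bmat n hn * jordan n ^ b
      = -Matrix.single ⟨0, by omega⟩ ⟨b + 1, by omega⟩ (1 : ℂ) := by
  rw [jordan_pow_top (by omega), Bmat, Matrix.mul_sub, std_mul_std, std_mul_std,
    if_neg (by simp <;> omega), if_pos (by simp <;> omega), zero_sub, neg_mul]
  rw [std_mul_pow b ⟨0, by omega⟩ ⟨1, by omega⟩ ((1:ℂ)*1) (by simp <;> omega), mul_one]
  exact congrArg Neg.neg (std_congr (by simp <;> omega) (by simp <;> omega) _)

end B

namespace Words

variable {n : ℕ}

lemma prod_mem_wordSpan {k : ℕ} {S : Set (Matrix (Fin n) (Fin n) ℂ)}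
    (w : List (Matrix (Fin n) (Fin n) ℂ)) (h1 : w.length ≤ k) (h2 : ∀ x ∈ w, x ∈ S) :
    w.prod ∈ wordSpan n k S :=
  Submodule.subset_span ⟨w, h1, h2, rfl⟩

/-- word J^a B J^b -/
def wd1 (J B : Matrix (Fin n) (Fin n) ℂ) (a b : ℕ) : List (Matrix (Fin n) (Fin n) ℂ) :=
  List.replicate a J ++ [B] ++ List.replicate b J

/-- word J^a B J^c B J^b -/
def wd2 (J B : Matrix (Fin n) (Fin n) ℂ) (a c b : ℕ) : List (Matrix (Fin n) (Fin n) ℂ) :=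
  List.replicate a J ++ [B] ++ List.replicate c J ++ [B] ++ List.replicate b J

lemma wd1_prod (J B : Matrix (Fin n) (Fin n) ℂ) (a b : ℕ) :
    (wd1 J B a b).prod = J ^ a * B * J ^ b := by
  rw [wd1, List.prod_append, List.prod_append, List.prod_replicate, List.prod_replicate,
    List.prod_singleton]

lemma wd2_prod (J B : Matrix (Fin n) (Fin n) ℂ) (a c b : ℕ) :
    (wd2 J B a c b).prod = J ^ a * B * J ^ c * B * J ^ b := by
  rw [wd2, List.prod_append, List.prod_append, List.prod_append, List.prod_append,
    List.prod_replicate, List.prod_replicate, List.prod_replicate, List.prod_singleton]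

lemma wd1_length (J B : Matrix (Fin n) (Fin n) ℂ) (a b : ℕ) :
    (wd1 J B a b).length = a + 1 + b := by simp [wd1]; omega

lemma wd2_length (J B : Matrix (Fin n) (Fin n) ℂ) (a c b : ℕ) :
    (wd2 J B a c b).length = a + 1 + c + 1 + b := by simp [wd2]; omega

lemma wd1_mem (J B : Matrix (Fin n) (Fin n) ℂ) (a b : ℕ) :
    ∀ x ∈ wd1 J B a b, x ∈ ({J, B} : Set (Matrix (Fin n) (Fin n) ℂ)) := by
  intro x hx
  simp only [wd1, List.mem_append, List.mem_replicate, List.mem_singleton] at hx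
  simp only [Set.mem_insert_iff, Set.mem_singleton_iff]
  tauto

lemma wd2_mem (J B : Matrix (Fin n) (Fin n) ℂ) (a c b : ℕ) :
    ∀ x ∈ wd2 J B a c b, x ∈ ({J, B} : Set (Matrix (Fin n) (Fin n) ℂ)) := by
  intro x hx
  simp only [wd2, List.mem_append, List.mem_replicate, List.mem_singleton] at hx
  simp only [Set.mem_insert_iff, Set.mem_singleton_iff]
  tauto

lemma repl_prod_mem {k : ℕ} {S : Set (Matrix (Fin n) (Fin n) ℂ)} (J : Matrix (Fin n) (Fin n) ℂ)
    (hJ : J ∈ S) (a : ℕ) (ha : a ≤ k) : J ^ a ∈ wordSpan n k S := by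
  have := prod_mem_wordSpan (List.replicate a J) (by simpa using ha)
    (by intro x hx; rw [List.eq_of_mem_replicate hx]; exact hJ)
  rwa [List.prod_replicate] at this

lemma wd1_prod_mem {k : ℕ} (J B : Matrix (Fin n) (Fin n) ℂ) (a b : ℕ)
    (hlen : a + 1 + b ≤ k) : J ^ a * B * J ^ b ∈ wordSpan n k {J, B} := by
  have := prod_mem_wordSpan (k := k) (wd1 J B a b) (by rw [wd1_length]; exact hlen) (wd1_mem J B a b)
  rwa [wd1_prod] at this

lemma wd2_prod_mem {k : ℕ} (J B : Matrix (Fin n) (Fin n) ℂ) (a c b : ℕ)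
    (hlen : a + 1 + c + 1 + b ≤ k) :
    J ^ a * B * J ^ c * B * J ^ b ∈ wordSpan n k {J, B} := by
  have := prod_mem_wordSpan (k := k) (wd2 J B a c b) (by rw [wd2_length]; exact hlen) (wd2_mem J B a c b)
  rwa [wd2_prod] at this

end Words

section Upper

open Words

variable (n) (hn : 3 ≤ n)

/-- all strictly lower triangular matrix units are in W -/
lemma lower_mem (i j : ℕ) (hj : j < i) (hi : i < n) :
    Matrix.single ⟨i, hi⟩ ⟨j, by omega⟩ (1 : ℂ) ∈ wordSpan n (2 * n - 3) {jordan n, Bmat n hn} := by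
  have h := wd2_prod_mem (k := 2 * n - 3) (jordan n) (Bmat n hn) (n - 1 - i) (n - 3) j
    (by omega)
  rw [lower_word n hn i j (by omega) (by omega) (by omega)] at h
  have := Submodule.neg_mem _ h
  rw [neg_neg] at this
  convert this using 2 <;> omega

/-- E_{i,j} for i < j -/
lemma upperstrict_mem : ∀ m : ℕ, ∀ i j : ℕ, (hij : i < j) → (hj : j < n) → i = m →
    Matrix.single ⟨i, by omega⟩ ⟨j, hj⟩ (1 : ℂ) ∈ wordSpan n (2 * n - 3) {jordan n, Bmat n hn} := by
  intro m
  induction m with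
  | zero =>
    rintro i j hij hj rfl
    by_cases hjtop : j = n - 1
    · subst hjtop
      have := repl_prod_mem (S := {jordan n, Bmat n hn}) (jordan n) (by simp) (n - 1)
        (by omega) (k := 2 * n - 3)
      rwa [jordan_pow_top (by omega)] at this
    · have h := wd1_prod_mem (k := 2 * n - 3) (jordan n) (Bmat n hn) (n - 1) (j - 1)
        (by omega)
      rw [top_word n hn (j - 1) (by omega)] at h
      have h2 := Submodule.neg_mem _ h
      rw [neg_neg] at h2
      convert h2 using 2 <;> exact Fin.ext (by simp <;> omega)
  | succ m ih =>
    rintro i j hij hj rfl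
    have h1 : Matrix.single (⟨m, by omega⟩ : Fin n) ⟨j - 1, by omega⟩ (1 : ℂ) ∈ wordSpan n (2 * n - 3) {jordan n, Bmat n hn} :=
      ih m (j - 1) (by omega) (by omega) rfl
    have h2 := wd1_prod_mem (k := 2 * n - 3) (jordan n) (Bmat n hn) (n - 2 - m) (j - 1)
      (by omega)
    rw [pair_word n hn m (j - 1) (by omega) (by omega)] at h2
    have h3 := Submodule.sub_mem _ h1 h2
    rw [sub_sub_cancel] at h3
    convert h3 using 2 <;> exact Fin.ext (by simp <;> omega)

/-- diagonal differences E00 - Ekk -/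
lemma diagdiff_mem : ∀ m : ℕ, (hm : m < n) →
    Matrix.single ⟨0, by omega⟩ ⟨0, by omega⟩ (1 : ℂ) -
      Matrix.single ⟨m, hm⟩ ⟨m, hm⟩ (1 : ℂ) ∈ wordSpan n (2 * n - 3) {jordan n, Bmat n hn} := by
  intro m
  induction m with
  | zero => intro hm; rw [sub_self]; exact Submodule.zero_mem _
  | succ m ih =>
    intro hm
    have h1 := ih (by omega)
    have h2 := wd1_prod_mem (k := 2 * n - 3) (jordan n) (Bmat n hn) (n - 2 - m) m
      (by omega)
    rw [pair_word n hn m m (by omega) (by omega)] at h2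
    have h3 := Submodule.add_mem _ h1 h2
    rw [sub_add_sub_cancel] at h3
    exact h3

lemma diag_mem (m : ℕ) (hm : m < n) :
    Matrix.single ⟨m, hm⟩ ⟨m, hm⟩ (1 : ℂ) ∈ wordSpan n (2 * n - 3) {jordan n, Bmat n hn} := by
  have hid : (1 : Matrix (Fin n) (Fin n) ℂ) ∈ wordSpan n (2 * n - 3) {jordan n, Bmat n hn} := by
    have := prod_mem_wordSpan (k := 2 * n - 3) (S := {jordan n, Bmat n hn}) []
      (by simp) (by simp)
    simpa using this
  have hsum : ∑ k : Fin n, (Matrix.single (⟨0, by omega⟩ : Fin n) ⟨0, by omega⟩ (1 : ℂ) -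
      Matrix.single k k 1) ∈ wordSpan n (2 * n - 3) {jordan n, Bmat n hn} :=
    Submodule.sum_mem _ (fun k _ => by
      have := diagdiff_mem n hn (k : ℕ) k.isLt
      convert this using 3 <;> simp [Fin.ext_iff])
  have he00 : Matrix.single (⟨0, by omega⟩ : Fin n) ⟨0, by omega⟩ (1 : ℂ) ∈ wordSpan n (2 * n - 3) {jordan n, Bmat n hn} := by
    have heq : ∑ k : Fin n, (Matrix.single (⟨0, by omega⟩ : Fin n) ⟨0, by omega⟩ (1 : ℂ) -
        Matrix.single k k 1) + 1
        = (n : ℂ) • Matrix.single (⟨0, by omega⟩ : Fin n) ⟨0, by omega⟩ (1 : ℂ) := by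
      rw [Finset.sum_sub_distrib, Finset.sum_const, Finset.card_univ, Fintype.card_fin,
        ← one_eq_sum_diag (by omega)]
      rw [sub_add_cancel, ← Nat.cast_smul_eq_nsmul ℂ]
    have hmem := Submodule.add_mem _ hsum hid
    rw [heq] at hmem
    have := Submodule.smul_mem _ ((n : ℂ)⁻¹) hmem
    rwa [smul_smul, inv_mul_cancel₀ (by exact_mod_cast (by omega : n ≠ 0)), one_smul] at this
  have h1 := diagdiff_mem n hn m hm
  have := Submodule.sub_mem _ he00 h1
  rwa [sub_sub_cancel] at this

lemma upper_top : wordSpan n (2 * n - 3) {jordan n, Bmat n hn} = ⊤ := by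
  rw [eq_top_iff]
  intro M _
  rw [Matrix.matrix_eq_sum_single M]
  refine Submodule.sum_mem _ (fun i _ => Submodule.sum_mem _ (fun j _ => ?_))
  have hsmul : Matrix.single i j (M i j) = (M i j) • Matrix.single i j (1 : ℂ) := by
    rw [smul_single, smul_eq_mul, mul_one]
  rw [hsmul]
  refine Submodule.smul_mem _ _ ?_
  rcases lt_trichotomy (j : ℕ) (i : ℕ) with h | h | h
  · have := lower_mem n hn i j h i.isLt
    convert this using 2 <;> simp [Fin.ext_iff]
  · have := diag_mem n hn i i.isLt
    have hji : j = i := Fin.ext h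
    subst hji
    convert this using 2 <;> simp [Fin.ext_iff]
  · have := upperstrict_mem n hn (i : ℕ) i j h j.isLt rfl
    convert this using 2 <;> simp [Fin.ext_iff]

end Upper

section Lower

variable {n : ℕ}

/-- matrices supported on the diagonal `j - i = d` -/
def Hg (n : ℕ) (d : ℤ) : Set (Matrix (Fin n) (Fin n) ℂ) :=
  {M | ∀ i j : Fin n, ((j : ℕ) : ℤ) - ((i : ℕ) : ℤ) ≠ d → M i j = 0}

lemma hg_one : (1 : Matrix (Fin n) (Fin n) ℂ) ∈ Hg n 0 := by
  intro i j h
  rw [Matrix.one_apply, if_neg (fun hc => h (by subst hc; ring))]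

lemma hg_mul {d₁ d₂ : ℤ} {M N : Matrix (Fin n) (Fin n) ℂ} (hM : M ∈ Hg n d₁) (hN : N ∈ Hg n d₂) :
    M * N ∈ Hg n (d₁ + d₂) := by
  intro i j h
  rw [Matrix.mul_apply]
  refine Finset.sum_eq_zero (fun k _ => ?_)
  by_cases hk : ((k : ℕ) : ℤ) - ((i : ℕ) : ℤ) = d₁
  · rw [hN k j (fun hc => h (by omega)), mul_zero]
  · rw [hM i k hk, zero_mul]

lemma hg_jordan : jordan n ∈ Hg n 1 := by
  intro i j h
  rw [jordan_apply, if_neg (fun hc => h (by omega))]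

lemma hg_B (hn : 3 ≤ n) : Bmat n hn ∈ Hg n (2 - n) := by
  intro i j h
  rw [Bmat, Matrix.sub_apply, std_apply, std_apply,
    if_neg (fun hc => h (by simp at hc; omega)), if_neg (fun hc => h (by simp at hc; omega)),
    sub_zero]

lemma hg_jordan_pow (m : ℕ) : jordan n ^ m ∈ Hg n m := by
  induction m with
  | zero => simpa using hg_one
  | succ m ih =>
    have h2 : ((m + 1 : ℕ) : ℤ) = (m : ℤ) + 1 := by push_cast; ring
    rw [pow_succ, h2]
    exact hg_mul ih hg_jordan

/-- the subdiagonal-sum functional -/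
noncomputable def phi (n : ℕ) : Matrix (Fin n) (Fin n) ℂ →ₗ[ℂ] ℂ where
  toFun M := ∑ i : Fin n, ∑ j : Fin n, (if (i : ℕ) = (j : ℕ) + 1 then 1 else 0) * M i j
  map_add' M N := by
    simp only [Matrix.add_apply, mul_add, Finset.sum_add_distrib]
  map_smul' c M := by
    simp only [Matrix.smul_apply, smul_eq_mul, RingHom.id_apply, Finset.mul_sum]
    congr 1; ext i; congr 1; ext j; ring

lemma phi_std (p q : Fin n) (c : ℂ) :
    phi n (Matrix.single p q c) = if (p : ℕ) = (q : ℕ) + 1 then c else 0 := by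
  show (∑ i : Fin n, ∑ j : Fin n, (if (i : ℕ) = (j : ℕ) + 1 then (1:ℂ) else 0) *
      Matrix.single p q c i j) = _
  rw [Finset.sum_eq_single p]
  · rw [Finset.sum_eq_single q]
    · have he : Matrix.single p q c p q = c := by rw [std_apply, if_pos ⟨rfl, rfl⟩]
      rw [he]
      split_ifs <;> [exact one_mul c; exact zero_mul c]
    · intro k _ hk
      have he : Matrix.single p q c p k = 0 := by
        rw [std_apply, if_neg (fun hc => hk (Fin.ext hc.2.symm))]
      rw [he, mul_zero]
    · intro hmem; exact absurd (Finset.mem_univ _) hmem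
  · intro k _ hk
    refine Finset.sum_eq_zero (fun l _ => ?_)
    have he : Matrix.single p q c k l = 0 := by
      rw [std_apply, if_neg (fun hc => hk (Fin.ext hc.1.symm))]
    rw [he, mul_zero]
  · intro hmem; exact absurd (Finset.mem_univ _) hmem

lemma phi_zero_of_hg {d : ℤ} {M : Matrix (Fin n) (Fin n) ℂ} (hM : M ∈ Hg n d) (hd : d ≠ -1) :
    phi n M = 0 := by
  show (∑ i : Fin n, ∑ j : Fin n, (if (i : ℕ) = (j : ℕ) + 1 then (1:ℂ) else 0) * M i j) = 0
  refine Finset.sum_eq_zero (fun i _ => Finset.sum_eq_zero (fun j _ => ?_))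
  by_cases hij : (i : ℕ) = (j : ℕ) + 1
  · rw [hM i j (fun hc => hd (by omega)), mul_zero]
  · rw [if_neg hij, zero_mul]

lemma prod_all_J : ∀ w : List (Matrix (Fin n) (Fin n) ℂ), (∀ x ∈ w, x = jordan n) →
    w.prod = jordan n ^ w.length := by
  intro w
  induction w with
  | nil => intro _; simp
  | cons x t ih =>
    intro h
    rw [List.prod_cons, h x (List.mem_cons_self), ih (fun y hy => h y (List.mem_cons_of_mem _ hy)),
      List.length_cons, ← pow_succ']

lemma word_classify (hn : 3 ≤ n) : ∀ w : List (Matrix (Fin n) (Fin n) ℂ),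
    (∀ x ∈ w, x = jordan n ∨ x = Bmat n hn) →
    ∃ k : ℕ, w.prod ∈ Hg n ((w.length : ℤ) - ((n : ℤ) - 1) * k) ∧
      (k = 0 → ∀ x ∈ w, x = jordan n) ∧
      (k = 1 → ∃ a b : ℕ, a + 1 + b = w.length ∧
        w.prod = jordan n ^ a * Bmat n hn * jordan n ^ b) := by
  intro w
  induction w with
  | nil =>
    intro _
    exact ⟨0, by simpa using hg_one, fun _ => by simp, fun h => by omega⟩
  | cons x t ih =>
    intro hmem
    obtain ⟨k, hH, h0, h1⟩ := ih (fun y hy => hmem y (List.mem_cons_of_mem _ hy))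
    rcases hmem x (List.mem_cons_self) with hx | hx
    · refine ⟨k, ?_, ?_, ?_⟩
      · have hL : (((x :: t).length : ℕ) : ℤ) - ((n : ℤ) - 1) * k
            = 1 + ((t.length : ℤ) - ((n : ℤ) - 1) * k) := by
          rw [List.length_cons]; push_cast; ring
        rw [hL, List.prod_cons, hx]
        exact hg_mul hg_jordan hH
      · intro hk y hy
        rcases List.mem_cons.mp hy with rfl | hy
        · exact hx
        · exact h0 hk y hy
      · intro hk
        obtain ⟨a, b, hab, hprod⟩ := h1 hk
        refine ⟨a + 1, b, by simp [List.length_cons]; omega, ?_⟩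
        rw [List.prod_cons, hx, hprod, ← mul_assoc, ← mul_assoc, ← pow_succ']
    · refine ⟨k + 1, ?_, fun hk => by omega, ?_⟩
      · have hL : (((x :: t).length : ℕ) : ℤ) - ((n : ℤ) - 1) * ((k : ℕ) + 1 : ℕ)
            = (2 - (n : ℤ)) + ((t.length : ℤ) - ((n : ℤ) - 1) * k) := by
          rw [List.length_cons]; push_cast; ring
        rw [hL, List.prod_cons, hx]
        exact hg_mul (hg_B hn) hH
      · intro hk
        have hk0 : k = 0 := by omega
        have hall := h0 hk0
        refine ⟨0, t.length, by rw [List.length_cons]; omega, ?_⟩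
        rw [List.prod_cons, hx, prod_all_J t hall, pow_zero, one_mul]

lemma phi_oneB (hn : 3 ≤ n) (a b : ℕ) (hab : a + b = n - 3) :
    phi n (jordan n ^ a * Bmat n hn * jordan n ^ b) = 0 := by
  rw [pow_mul_B n hn a (by omega), sub_mul,
    std_mul_pow _ _ _ _ (by simp <;> omega), std_mul_pow _ _ _ _ (by simp <;> omega),
    map_sub, phi_std, phi_std, if_pos (by simp <;> omega), if_pos (by simp <;> omega), sub_self]

lemma lower_ne_top (hn : 3 ≤ n) :
    wordSpan n (2 * n - 4) {jordan n, Bmat n hn} ≠ ⊤ := by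
  intro htop
  have hker : wordSpan n (2 * n - 4) {jordan n, Bmat n hn} ≤ LinearMap.ker (phi n) := by
    rw [wordSpan]
    refine Submodule.span_le.mpr ?_
    rintro M ⟨w, hlen, hmem, rfl⟩
    simp only [SetLike.mem_coe, LinearMap.mem_ker]
    obtain ⟨k, hH, h0, h1⟩ := word_classify hn w (fun x hx => by
      rcases hmem x hx with h | h
      · exact Or.inl h
      · exact Or.inr h)
    by_cases hdeg : (w.length : ℤ) - ((n : ℤ) - 1) * k = -1
    · have hk : k = 1 := by
        match k with
        | 0 => exfalso; simp at hdeg; try omega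
        | 1 => rfl
        | (k + 2) =>
          exfalso
          have hb : (2 : ℤ) * ((n : ℤ) - 1) ≤ ((n : ℤ) - 1) * ((k : ℤ) + 2) := by
            have h2 : (2 : ℤ) ≤ (k : ℤ) + 2 := by omega
            have hn1 : (0 : ℤ) ≤ (n : ℤ) - 1 := by omega
            nlinarith
          have hc : ((k : ℕ) + 2 : ℕ) = ((k : ℤ) + 2 : ℤ) := by push_cast; ring
          rw [show (((k + 2 : ℕ) : ℤ)) = ((k : ℤ) + 2) by push_cast; ring] at hdeg
          omega
      obtain ⟨a, b, hab, hprod⟩ := h1 hk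
      subst hk
      have hlen2 : w.length = n - 2 := by
        push_cast at hdeg
        omega
      rw [hprod]
      exact phi_oneB hn a b (by omega)
    · exact phi_zero_of_hg hH hdeg
  rw [htop] at hker
  have h1 : phi n (Matrix.single ⟨1, by omega⟩ ⟨0, by omega⟩ (1 : ℂ)) = 0 :=
    hker Submodule.mem_top
  rw [phi_std, if_pos (by simp)] at h1
  exact one_ne_zero h1

end Lower
end Stmt8

/-- For `n ≥ 3` and `B_n = E_{n-1,1} - E_{n,2}`: the span of words in `{J_n, B_n}` of
length at most `2n - 3` is all of `M_n(ℂ)`, while the span of words of length at most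
`2n - 4` is a proper subspace; that is, `l({J_n, B_n}) = 2n - 3`. -/
theorem stmt_8 (n : ℕ) (hn : 3 ≤ n) :
    let B : Matrix (Fin n) (Fin n) ℂ :=
      Matrix.single ⟨n - 2, by omega⟩ ⟨0, by omega⟩ (1 : ℂ) -
        Matrix.single ⟨n - 1, by omega⟩ ⟨1, by omega⟩ (1 : ℂ)
    wordSpan n (2 * n - 3) {jordan n, B} = ⊤ ∧
      wordSpan n (2 * n - 4) {jordan n, B} ≠ ⊤ := by
  intro B
  have hB : B = Stmt8.Bmat n hn := rfl
  rw [hB]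
  exact ⟨Stmt8.upper_top n hn, Stmt8.lower_ne_top hn⟩
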